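/- Let H be a complex Hilbert space, M and N closed subspaces of H, and P, Q the orthogonal projections of H onto M and N respectively. Then the sequence ((PQ)ⁿ)_{n≥1} is a Cauchy sequence in the operator norm if and only if M + N is a closed subspace of H; and in that case (PQ)ⁿ converges in operator norm to the orthogonal projection of H onto M ∩ N. -/

import Mathlib

set_option maxHeartbeats 1000000
set_option linter.unusedSectionVars false


open Filter Topology

noncomputable section

namespace TwoProj

variable {H : Type*} [NormedAddCommGroup H] [InnerProductSpace ℂ H] [CompleteSpace H]

local notation "⟪" x ", " y "⟫" => @inner ℂ _ _ x y

/-- `T` is the orthogonal projection onto `K`. -/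
def IsOP (K : Submodule ℂ H) (T : H →L[ℂ] H) : Prop :=
  ∀ x : H, T x ∈ K ∧ x - T x ∈ Kᗮ

variable {K K' : Submodule ℂ H} {T T' : H →L[ℂ] H}

theorem IsOP.eq_self (h : IsOP K T) {m : H} (hm : m ∈ K) : T m = m := by
  have h1 : m - T m ∈ K := sub_mem hm (h m).1
  have h3 := Submodule.mem_inf.mpr ⟨h1, (h m).2⟩
  rw [Submodule.inf_orthogonal_eq_bot K, Submodule.mem_bot] at h3
  have := sub_eq_zero.mp h3
  exact this.symm

/-- Uniqueness of the orthogonal projection. -/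
theorem IsOP.unique (h : IsOP K T) (h' : IsOP K T') : T = T' := by
  ext x
  have h1 : T x - T' x ∈ K := sub_mem (h x).1 (h' x).1
  have h2 : T x - T' x ∈ Kᗮ := by
    have : T x - T' x = (x - T' x) - (x - T x) := by abel
    rw [this]; exact sub_mem (h' x).2 (h x).2
  have h3 := Submodule.mem_inf.mpr ⟨h1, h2⟩
  rw [Submodule.inf_orthogonal_eq_bot K, Submodule.mem_bot] at h3
  exact sub_eq_zero.mp h3

theorem IsOP.inner_comm (h : IsOP K T) (x y : H) : ⟪T x, y⟫ = ⟪x, T y⟫ := by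
  have key : ∀ a b : H, ⟪T a, b⟫ = ⟪T a, T b⟫ := fun a b => by
    have : ⟪T a, b - T b⟫ = 0 :=
      Submodule.inner_right_of_mem_orthogonal (h a).1 (h b).2
    rw [inner_sub_right] at this
    exact sub_eq_zero.mp this
  have key2 : ⟪x, T y⟫ = ⟪T x, T y⟫ := by
    rw [← inner_conj_symm, key y x, inner_conj_symm]
  rw [key x y, key2]

theorem IsOP.isSelfAdjoint (h : IsOP K T) : IsSelfAdjoint T := by
  rw [ContinuousLinearMap.isSelfAdjoint_iff']
  exact ((ContinuousLinearMap.eq_adjoint_iff T T).mpr fun x y => h.inner_comm x y).symm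

theorem IsOP.idem (h : IsOP K T) : T * T = T := by
  ext x; exact h.eq_self (h x).1

theorem IsOP.norm_sq (h : IsOP K T) (x : H) : ‖x‖ ^ 2 = ‖T x‖ ^ 2 + ‖x - T x‖ ^ 2 := by
  have hortho : ⟪T x, x - T x⟫ = 0 :=
    Submodule.inner_right_of_mem_orthogonal (h x).1 (h x).2
  have := @norm_add_sq ℂ _ _ _ _ (T x) (x - T x)
  simp only [hortho, map_zero, mul_zero, add_zero, zero_add] at this
  simpa using this

theorem IsOP.norm_apply_le (h : IsOP K T) (x : H) : ‖T x‖ ≤ ‖x‖ := by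
  have := h.norm_sq x
  nlinarith [norm_nonneg (T x), norm_nonneg x, sq_nonneg ‖x - T x‖]

theorem IsOP.norm_le_one (h : IsOP K T) : ‖T‖ ≤ 1 :=
  T.opNorm_le_bound zero_le_one fun x => by simpa using h.norm_apply_le x

theorem IsOP.apply_eq_zero_iff (h : IsOP K T) {x : H} : T x = 0 ↔ x ∈ Kᗮ := by
  constructor
  · intro hx
    have := (h x).2
    rwa [hx, sub_zero] at this
  · intro hx
    have h1 : T x ∈ Kᗮ := by
      have : T x = x - (x - T x) := by abel
      rw [this]; exact sub_mem hx (h x).2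
    have h3 := Submodule.mem_inf.mpr ⟨(h x).1, h1⟩
    rwa [Submodule.inf_orthogonal_eq_bot K, Submodule.mem_bot] at h3

/-- A fixed point of a contraction is a fixed point of the adjoint. -/
theorem adjoint_fixed (hT : ‖T‖ ≤ 1) {y : H} (hy : T y = y) :
    ContinuousLinearMap.adjoint T y = y := by
  have hsq : ‖ContinuousLinearMap.adjoint T y - y‖ ^ 2 ≤ 0 := by
    have hexp := @norm_sub_sq ℂ _ _ _ _ (ContinuousLinearMap.adjoint T y) y
    have hinner : ⟪ContinuousLinearMap.adjoint T y, y⟫ = ⟪y, y⟫ := by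
      rw [ContinuousLinearMap.adjoint_inner_left, hy]
    have hnorm : ‖ContinuousLinearMap.adjoint T y‖ ≤ ‖y‖ := by
      calc ‖ContinuousLinearMap.adjoint T y‖ ≤ ‖ContinuousLinearMap.adjoint T‖ * ‖y‖ :=
            (ContinuousLinearMap.adjoint T).le_opNorm y
        _ ≤ 1 * ‖y‖ := by
            rw [← ContinuousLinearMap.star_eq_adjoint, norm_star]
            exact mul_le_mul_of_nonneg_right hT (norm_nonneg y)
        _ = ‖y‖ := one_mul _
    rw [hexp, hinner] at *
    have : (RCLike.re (⟪y, y⟫ : ℂ)) = ‖y‖ ^ 2 := by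
      rw [@inner_self_eq_norm_sq ℂ]
    nlinarith [norm_nonneg (ContinuousLinearMap.adjoint T y), norm_nonneg y]
  have := sq_nonneg ‖ContinuousLinearMap.adjoint T y - y‖
  have hz : ‖ContinuousLinearMap.adjoint T y - y‖ = 0 := by nlinarith
  rw [norm_eq_zero] at hz
  exact sub_eq_zero.mp hz

/-- An idempotent contraction is the orthogonal projection onto its fixed space. -/
theorem isOP_of_idem_contraction (hidem : T * T = T) (hT : ‖T‖ ≤ 1) :
    IsOP (LinearMap.ker ((T - 1 : H →L[ℂ] H) : H →ₗ[ℂ] H)) T := by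
  have hfix : ∀ z : H, z ∈ LinearMap.ker ((T - 1 : H →L[ℂ] H) : H →ₗ[ℂ] H) ↔ T z = z := by
    intro z
    simp [LinearMap.mem_ker, sub_eq_zero]
  intro x
  constructor
  · rw [hfix]
    have := congrFun (congrArg (fun f : H →L[ℂ] H => (f : H → H)) hidem) x
    simpa using this
  · rw [Submodule.mem_orthogonal]
    intro u hu
    rw [hfix] at hu
    have hu' := adjoint_fixed hT hu
    rw [inner_sub_right]
    have : ⟪u, T x⟫ = ⟪u, x⟫ := by
      rw [← (ContinuousLinearMap.adjoint_inner_left T x u), hu']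
    rw [this, sub_self]


theorem pow_mul_idem {R : Type*} [Ring R] {A E : R} (h1 : A * E = E) :
    ∀ n : ℕ, A ^ (n + 1) * E = E := by
  intro n
  induction n with
  | zero => simpa using h1
  | succ k ih => rw [pow_succ, mul_assoc, h1, ih]

theorem pow_sub_comm {R : Type*} [Ring R] {A E : R} (h1 : A * E = E) (h2 : E * A = E)
    (h3 : E * E = E) : ∀ n : ℕ, (A - E) ^ (n + 1) = A ^ (n + 1) - E := by
  intro n
  induction n with
  | zero => simp
  | succ k ih =>
    rw [pow_succ, ih, sub_mul, mul_sub, mul_sub, pow_mul_idem h1, h2, h3, ← pow_succ]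
    abel

theorem norm_pow_le_of_sa {T : H →L[ℂ] H} (h : IsSelfAdjoint T) {n : ℕ} (hn : n ≠ 0) :
    ‖T‖ ^ n ≤ ‖T ^ n‖ := by
  rcases eq_or_lt_of_le (norm_nonneg T) with h0 | h0
  · calc ‖T‖ ^ n = 0 := by rw [← h0]; exact zero_pow hn
      _ ≤ ‖T ^ n‖ := norm_nonneg _
  · have hk : n < 2 ^ n := Nat.lt_two_pow_self
    have h2k : ‖T ^ 2 ^ n‖ = ‖T‖ ^ 2 ^ n := by
      have := congrArg (fun x : NNReal => (x : ℝ)) (h.nnnorm_pow_two_pow n)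
      simpa [NNReal.coe_pow] using this
    have hsplit : T ^ 2 ^ n = T ^ n * T ^ (2 ^ n - n) := by
      rw [← pow_add]; congr 1; omega
    have hle : ‖T‖ ^ 2 ^ n ≤ ‖T ^ n‖ * ‖T‖ ^ (2 ^ n - n) := by
      calc ‖T‖ ^ 2 ^ n = ‖T ^ 2 ^ n‖ := h2k.symm
        _ = ‖T ^ n * T ^ (2 ^ n - n)‖ := by rw [hsplit]
        _ ≤ ‖T ^ n‖ * ‖T ^ (2 ^ n - n)‖ := norm_mul_le _ _
        _ ≤ ‖T ^ n‖ * ‖T‖ ^ (2 ^ n - n) :=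
            mul_le_mul_of_nonneg_left (norm_pow_le' T (by omega)) (norm_nonneg _)
    have hpow : ‖T‖ ^ 2 ^ n = ‖T‖ ^ n * ‖T‖ ^ (2 ^ n - n) := by
      rw [← pow_add]; congr 1; omega
    have hpos : (0 : ℝ) < ‖T‖ ^ (2 ^ n - n) := pow_pos h0 _
    rw [hpow] at hle
    exact le_of_mul_le_mul_right hle hpos

theorem norm_lt_one_of_pow {P' Q' : H →L[ℂ] H} (hPsa : IsSelfAdjoint P')
    (hQsa : IsSelfAdjoint Q') (hPi : P' * P' = P') (hQi : Q' * Q' = Q') (hPn : ‖P'‖ ≤ 1)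
    {n : ℕ} (h : ‖(P' * Q') ^ (n + 1)‖ < 1) : ‖P' * Q'‖ < 1 := by
  set T := P' * Q' * P' with hT
  have hTsa : IsSelfAdjoint T := by
    rw [IsSelfAdjoint, hT, star_mul, star_mul, hPsa.star_eq, hQsa.star_eq, mul_assoc]
  have key : P' * T = T := by
    rw [hT, ← mul_assoc, ← mul_assoc, hPi]
  have hTpow : ∀ m : ℕ, T ^ (m + 1) = (P' * Q') ^ (m + 1) * P' := by
    intro m
    induction m with
    | zero => simp [hT]
    | succ k ih =>
      rw [pow_succ, ih, mul_assoc, key, hT, ← mul_assoc, ← pow_succ]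
  have h1 : ‖T‖ ^ (n + 1) ≤ ‖T ^ (n + 1)‖ := norm_pow_le_of_sa hTsa (Nat.succ_ne_zero n)
  have h2 : ‖T ^ (n + 1)‖ ≤ ‖(P' * Q') ^ (n + 1)‖ := by
    rw [hTpow n]
    calc ‖(P' * Q') ^ (n + 1) * P'‖ ≤ ‖(P' * Q') ^ (n + 1)‖ * ‖P'‖ := norm_mul_le _ _
      _ ≤ ‖(P' * Q') ^ (n + 1)‖ * 1 := mul_le_mul_of_nonneg_left hPn (norm_nonneg _)
      _ = ‖(P' * Q') ^ (n + 1)‖ := mul_one _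
  have hTlt : ‖T‖ < 1 := by
    by_contra hcon
    push_neg at hcon
    have h3 : (1 : ℝ) ^ (n + 1) ≤ ‖T‖ ^ (n + 1) := pow_le_pow_left₀ (by norm_num) hcon (n + 1)
    rw [one_pow] at h3
    linarith
  have hstar : ‖Q' * P'‖ * ‖Q' * P'‖ = ‖T‖ := by
    have h3 : star (Q' * P') * (Q' * P') = T := by
      rw [star_mul, hPsa.star_eq, hQsa.star_eq, ← mul_assoc, mul_assoc P' Q' Q', hQi]
    rw [← h3, CStarRing.norm_star_mul_self]
  have hQP : ‖P' * Q'‖ = ‖Q' * P'‖ := by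
    rw [← norm_star (Q' * P'), star_mul, hPsa.star_eq, hQsa.star_eq]
  nlinarith [norm_nonneg (P' * Q')]


theorem IsOP.mul_eq_right {K K' : Submodule ℂ H} {T S : H →L[ℂ] H} (hT : IsOP K T)
    (hS : IsOP K' S) (hKK : K' ≤ K) : T * S = S := by
  ext x
  exact hT.eq_self (hKK (hS x).1)

theorem IsOP.mul_eq_left {K K' : Submodule ℂ H} {T S : H →L[ℂ] H} (hT : IsOP K T)
    (hS : IsOP K' S) (hKK : K' ≤ K) : S * T = S := by
  have h1 := hT.mul_eq_right hS hKK
  calc S * T = star (star T * star S) := by rw [star_mul, star_star, star_star]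
    _ = star (T * S) := by rw [hT.isSelfAdjoint.star_eq, hS.isSelfAdjoint.star_eq]
    _ = star S := by rw [h1]
    _ = S := hS.isSelfAdjoint.star_eq

/-- If the "angle norm" is `< 1`, the sum of the two subspaces is closed. -/
theorem closed_of_norm_lt {M' N' : Submodule ℂ H} {P' Q' : H →L[ℂ] H}
    (hM' : IsClosed (M' : Set H)) (hN' : IsClosed (N' : Set H))
    (hP' : IsOP M' P') (hQ' : IsOP N' Q') (hc : ‖P' * Q'‖ < 1) :
    IsClosed ((M' ⊔ N' : Submodule ℂ H) : Set H) := by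
  set c := ‖P' * Q'‖ with hcdef
  have hc0 : 0 ≤ c := norm_nonneg _
  have hinner : ∀ m ∈ M', ∀ n ∈ N', ‖(⟪m, n⟫ : ℂ)‖ ≤ c * (‖m‖ * ‖n‖) := by
    intro m hm n hn
    have h1 : (⟪m, n⟫ : ℂ) = ⟪m, (P' * Q') n⟫ := by
      conv_lhs => rw [← hQ'.eq_self hn]
      rw [ContinuousLinearMap.mul_apply, ← hP'.inner_comm, hP'.eq_self hm]
    rw [h1]
    calc ‖(⟪m, (P' * Q') n⟫ : ℂ)‖ ≤ ‖m‖ * ‖(P' * Q') n‖ := norm_inner_le_norm _ _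
      _ ≤ ‖m‖ * (c * ‖n‖) :=
          mul_le_mul_of_nonneg_left ((P' * Q').le_opNorm n) (norm_nonneg m)
      _ = c * (‖m‖ * ‖n‖) := by ring
  have hlow : ∀ m ∈ M', ∀ n ∈ N', (1 - c) * (‖m‖ ^ 2 + ‖n‖ ^ 2) ≤ ‖m + n‖ ^ 2 := by
    intro m hm n hn
    have hexp := @norm_add_sq ℂ _ _ _ _ m n
    have hre : -(c * (‖m‖ * ‖n‖)) ≤ RCLike.re (⟪m, n⟫ : ℂ) := by
      have h1 : |RCLike.re (⟪m, n⟫ : ℂ)| ≤ ‖(⟪m, n⟫ : ℂ)‖ := RCLike.abs_re_le_norm _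
      have h2 := hinner m hm n hn
      have := neg_abs_le (RCLike.re (⟪m, n⟫ : ℂ))
      linarith
    nlinarith [sq_nonneg (‖m‖ - ‖n‖), norm_nonneg m, norm_nonneg n]
  haveI : CompleteSpace M' := hM'.completeSpace_coe
  haveI : CompleteSpace N' := hN'.completeSpace_coe
  set f : ↥M' × ↥N' →L[ℂ] H :=
    M'.subtypeL.comp (ContinuousLinearMap.fst ℂ ↥M' ↥N') +
      N'.subtypeL.comp (ContinuousLinearMap.snd ℂ ↥M' ↥N') with hfdef
  have hfapply : ∀ p : ↥M' × ↥N', f p = (p.1 : H) + (p.2 : H) := fun p => rfl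
  have hrange : Set.range f = ((M' ⊔ N' : Submodule ℂ H) : Set H) := by
    ext x
    constructor
    · rintro ⟨p, rfl⟩
      rw [hfapply]
      exact Submodule.add_mem_sup p.1.2 p.2.2
    · intro hx
      obtain ⟨m, hm, n, hn, rfl⟩ := Submodule.mem_sup.mp hx
      exact ⟨(⟨m, hm⟩, ⟨n, hn⟩), rfl⟩
  have hcpos : (0 : ℝ) < 1 - c := by linarith
  set s := Real.sqrt (1 - c) with hsdef
  have hs0 : 0 < s := Real.sqrt_pos.mpr hcpos
  have hanti : AntilipschitzWith (⟨s⁻¹, by positivity⟩ : NNReal) f := by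
    refine antilipschitzWith_iff_le_mul_dist.mpr ?_
    intro p q
    have hdist : dist (f p) (f q) = ‖f (p - q)‖ := by
      rw [dist_eq_norm, ← map_sub]
    have hd1 : dist p q = max ‖(p.1 : H) - (q.1 : H)‖ ‖(p.2 : H) - (q.2 : H)‖ := by
      rw [Prod.dist_eq, dist_eq_norm, dist_eq_norm]
      norm_cast
    set a : H := (p.1 : H) - (q.1 : H) with hadef
    set b : H := (p.2 : H) - (q.2 : H) with hbdef
    have ham : a ∈ M' := sub_mem p.1.2 q.1.2
    have hbn : b ∈ N' := sub_mem p.2.2 q.2.2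
    have hfab : f (p - q) = a + b := by rw [hfapply]; rfl
    have hsq : (s * max ‖a‖ ‖b‖) ^ 2 ≤ ‖a + b‖ ^ 2 := by
      have h1 := hlow a ham b hbn
      have h2 : (max ‖a‖ ‖b‖) ^ 2 ≤ ‖a‖ ^ 2 + ‖b‖ ^ 2 := by
        rcases max_cases ‖a‖ ‖b‖ with ⟨h, _⟩ | ⟨h, _⟩ <;> rw [h] <;>
          nlinarith [sq_nonneg ‖a‖, sq_nonneg ‖b‖]
      have h3 : s ^ 2 = 1 - c := Real.sq_sqrt hcpos.le
      calc (s * max ‖a‖ ‖b‖) ^ 2 = (1 - c) * (max ‖a‖ ‖b‖) ^ 2 := by rw [mul_pow, h3]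
        _ ≤ (1 - c) * (‖a‖ ^ 2 + ‖b‖ ^ 2) := by
            exact mul_le_mul_of_nonneg_left h2 hcpos.le
        _ ≤ ‖a + b‖ ^ 2 := h1
    have hle : s * max ‖a‖ ‖b‖ ≤ ‖a + b‖ := by
      have h4 : 0 ≤ s * max ‖a‖ ‖b‖ := by positivity
      nlinarith [norm_nonneg (a + b)]
    rw [hdist, hd1, hfab]
    show max ‖a‖ ‖b‖ ≤ s⁻¹ * ‖a + b‖
    rw [← mul_le_mul_iff_right₀ hs0, ← mul_assoc, mul_inv_cancel₀ hs0.ne', one_mul]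
    exact hle
  rw [← hrange]
  exact hanti.isClosed_range f.uniformContinuous

/-- If the sum of two closed subspaces meeting trivially is closed,
the "angle norm" is `< 1`. -/
theorem norm_lt_of_closed {M' N' : Submodule ℂ H} {P' Q' : H →L[ℂ] H}
    (hM' : IsClosed (M' : Set H)) (hN' : IsClosed (N' : Set H))
    (hP' : IsOP M' P') (hQ' : IsOP N' Q') (hMN : M' ⊓ N' = ⊥)
    (hclosed : IsClosed ((M' ⊔ N' : Submodule ℂ H) : Set H)) : ‖P' * Q'‖ < 1 := by
  haveI : CompleteSpace M' := hM'.completeSpace_coe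
  haveI : CompleteSpace N' := hN'.completeSpace_coe
  haveI : CompleteSpace ↥(M' ⊔ N') := hclosed.completeSpace_coe
  set f : ↥M' × ↥N' →L[ℂ] H :=
    M'.subtypeL.comp (ContinuousLinearMap.fst ℂ ↥M' ↥N') +
      N'.subtypeL.comp (ContinuousLinearMap.snd ℂ ↥M' ↥N') with hfdef
  have hfapply : ∀ p : ↥M' × ↥N', f p = (p.1 : H) + (p.2 : H) := fun p => rfl
  set φ : ↥M' × ↥N' →L[ℂ] ↥(M' ⊔ N') :=
    f.codRestrict (M' ⊔ N') (fun p => by rw [hfapply]; exact Submodule.add_mem_sup p.1.2 p.2.2)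
    with hφdef
  have hφapply : ∀ p, ((φ p : H)) = (p.1 : H) + (p.2 : H) := fun p => rfl
  have hker : φ.ker = ⊥ := by
    rw [LinearMap.ker_eq_bot']
    intro p hp
    have h1 : (p.1 : H) + (p.2 : H) = 0 := by
      have := congrArg (fun z : ↥(M' ⊔ N') => (z : H)) hp
      simpa [hφapply] using this
    have h2 : (p.1 : H) ∈ M' ⊓ N' := by
      refine Submodule.mem_inf.mpr ⟨p.1.2, ?_⟩
      have : (p.1 : H) = -(p.2 : H) := eq_neg_of_add_eq_zero_left h1
      rw [this]
      exact neg_mem p.2.2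
    rw [hMN, Submodule.mem_bot] at h2
    have h3 : (p.2 : H) = 0 := by rw [h2] at h1; simpa using h1
    ext
    · exact h2
    · exact h3
  have hsurj : φ.range = ⊤ := by
    rw [LinearMap.range_eq_top]
    rintro ⟨x, hx⟩
    obtain ⟨m, hm, n, hn, rfl⟩ := Submodule.mem_sup.mp hx
    exact ⟨(⟨m, hm⟩, ⟨n, hn⟩), rfl⟩
  have hex : ∃ C : ℝ, 1 ≤ C ∧ ∀ m : H, m ∈ M' → ‖m‖ ≤ C * ‖m - Q' m‖ := by
    set e := ContinuousLinearEquiv.ofBijective φ hker hsurj with hedef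
    refine ⟨max ‖(e.symm : ↥(M' ⊔ N') →L[ℂ] ↥M' × ↥N')‖ 1, le_max_right _ _, ?_⟩
    intro m hm
    have hQm : Q' m ∈ N' := (hQ' m).1
    set p : ↥M' × ↥N' := (⟨m, hm⟩, ⟨-Q' m, neg_mem hQm⟩) with hpdef
    have hy : m - Q' m ∈ M' ⊔ N' := by
      have h5 : m - Q' m = m + (-Q' m) := by abel
      rw [h5]
      exact Submodule.add_mem_sup hm (neg_mem hQm)
    set y : ↥(M' ⊔ N') := ⟨m - Q' m, hy⟩ with hydef
    have hφp : φ p = y := by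
      apply Subtype.ext
      rw [hφapply]
      show m + (-Q' m) = m - Q' m
      abel
    have hsymm : e.symm y = p := by
      rw [← hφp, hedef]
      exact ContinuousLinearEquiv.ofBijective_symm_apply_apply φ hker hsurj p
    calc ‖m‖ = ‖p.1‖ := by rw [hpdef]; norm_cast
      _ ≤ ‖p‖ := norm_fst_le p
      _ = ‖e.symm y‖ := by rw [hsymm]
      _ ≤ ‖(e.symm : ↥(M' ⊔ N') →L[ℂ] ↥M' × ↥N')‖ * ‖y‖ :=
          (e.symm : ↥(M' ⊔ N') →L[ℂ] ↥M' × ↥N') |>.le_opNorm y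
      _ ≤ max ‖(e.symm : ↥(M' ⊔ N') →L[ℂ] ↥M' × ↥N')‖ 1 * ‖y‖ :=
          mul_le_mul_of_nonneg_right (le_max_left _ _) (norm_nonneg _)
      _ = max ‖(e.symm : ↥(M' ⊔ N') →L[ℂ] ↥M' × ↥N')‖ 1 * ‖m - Q' m‖ := by
          rw [hydef]; norm_cast
  clear hker hsurj hφapply hφdef φ hfapply hfdef f
  obtain ⟨C, hC1, hkey⟩ := hex
  have hCpos : (0 : ℝ) < C := lt_of_lt_of_le one_pos hC1
  have hargnn : (0 : ℝ) ≤ 1 - 1 / C ^ 2 := by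
    have h8 : 1 / C ^ 2 ≤ 1 := by
      rw [div_le_one (by positivity)]
      nlinarith
    linarith
  set k : ℝ := Real.sqrt (1 - 1 / C ^ 2) with hkdef
  have hk0 : 0 ≤ k := Real.sqrt_nonneg _
  have hksq : k ^ 2 = 1 - 1 / C ^ 2 := Real.sq_sqrt hargnn
  have hklt : k < 1 := by
    have harg : 1 - 1 / C ^ 2 < 1 := by
      have h9 : 0 < 1 / C ^ 2 := by positivity
      linarith
    nlinarith
  have hQbound : ∀ m : H, m ∈ M' → ‖Q' m‖ ≤ k * ‖m‖ := by
    intro m hm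
    have h1 := hkey m hm
    have h2 := hQ'.norm_sq m
    have h3 : ‖m‖ / C ≤ ‖m - Q' m‖ := by
      rw [div_le_iff₀ hCpos]
      linarith [h1, mul_comm C ‖m - Q' m‖]
    have h4 : ‖Q' m‖ ^ 2 ≤ (k * ‖m‖) ^ 2 := by
      have h5 : (‖m‖ / C) ^ 2 ≤ ‖m - Q' m‖ ^ 2 := by
        apply sq_le_sq' _ h3
        have h10 : 0 ≤ ‖m‖ / C := by positivity
        linarith [norm_nonneg (m - Q' m)]
      have h6 : (k * ‖m‖) ^ 2 = ‖m‖ ^ 2 - (‖m‖ / C) ^ 2 := by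
        rw [mul_pow, hksq, div_pow]
        field_simp
      linarith
    have h7 : 0 ≤ k * ‖m‖ := by positivity
    nlinarith [norm_nonneg (Q' m)]
  have hQP : ‖Q' * P'‖ ≤ k := by
    apply ContinuousLinearMap.opNorm_le_bound _ hk0
    intro x
    calc ‖(Q' * P') x‖ = ‖Q' (P' x)‖ := by rw [ContinuousLinearMap.mul_apply]
      _ ≤ k * ‖P' x‖ := hQbound (P' x) (hP' x).1
      _ ≤ k * ‖x‖ := mul_le_mul_of_nonneg_left (hP'.norm_apply_le x) hk0
  have hfinal : ‖P' * Q'‖ = ‖Q' * P'‖ := by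
    rw [← norm_star (Q' * P'), star_mul, hP'.isSelfAdjoint.star_eq, hQ'.isSelfAdjoint.star_eq]
  rw [hfinal]
  exact lt_of_le_of_lt hQP hklt


theorem master {M N : Submodule ℂ H} (hM : IsClosed (M : Set H)) (hN : IsClosed (N : Set H))
    {P Q : H →L[ℂ] H} (hP : IsOP M P) (hQ : IsOP N Q) :
    (CauchySeq (fun n : ℕ => (P * Q) ^ (n + 1)) ↔
      IsClosed ((M ⊔ N : Submodule ℂ H) : Set H)) ∧
    (IsClosed ((M ⊔ N : Submodule ℂ H) : Set H) →
      ∀ R : H →L[ℂ] H, IsOP (M ⊓ N) R →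
        Tendsto (fun n : ℕ => (P * Q) ^ (n + 1)) atTop (𝓝 R)) := by
  set L : Submodule ℂ H := M ⊓ N with hLdef
  have hLclosed : IsClosed (L : Set H) := by
    rw [hLdef, Submodule.coe_inf]
    exact hM.inter hN
  haveI : CompleteSpace L := hLclosed.completeSpace_coe
  set E : H →L[ℂ] H := L.subtypeL.comp (L.orthogonalProjectionOnto) with hEdef
  have hE : IsOP L E :=
    fun x => ⟨Submodule.coe_mem (L.orthogonalProjectionOnto x),
      Submodule.sub_starProjection_mem_orthogonal x⟩
  have hPE : P * E = E := hP.mul_eq_right hE inf_le_left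
  have hEP : E * P = E := hP.mul_eq_left hE inf_le_left
  have hQE : Q * E = E := hQ.mul_eq_right hE inf_le_right
  have hEQ : E * Q = E := hQ.mul_eq_left hE inf_le_right
  have hEE : E * E = E := hE.idem
  have hAE : (P * Q) * E = E := by rw [mul_assoc, hQE, hPE]
  have hEA : E * (P * Q) = E := by rw [← mul_assoc, hEP, hEQ]
  set P' : H →L[ℂ] H := P - E with hP'def
  set Q' : H →L[ℂ] H := Q - E with hQ'def
  have hPQ' : P' * Q' = P * Q - E := by
    rw [hP'def, hQ'def, sub_mul, mul_sub, mul_sub, hPE, hEQ, hEE]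
    abel
  have hgeom : ∀ n : ℕ, (P * Q) ^ (n + 1) - E = (P' * Q') ^ (n + 1) := by
    intro n
    rw [hPQ']
    exact (pow_sub_comm hAE hEA hEE n).symm
  set M' : Submodule ℂ H := M ⊓ Lᗮ with hM'def
  set N' : Submodule ℂ H := N ⊓ Lᗮ with hN'def
  have hM'c : IsClosed (M' : Set H) := by
    rw [hM'def, Submodule.coe_inf]
    exact hM.inter (Submodule.isClosed_orthogonal L)
  have hN'c : IsClosed (N' : Set H) := by
    rw [hN'def, Submodule.coe_inf]
    exact hN.inter (Submodule.isClosed_orthogonal L)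
  -- `P'` is the orthogonal projection onto `M'`
  have hprojaux : ∀ (K : Submodule ℂ H) (T : H →L[ℂ] H), L ≤ K →
      IsOP K T → E * T = E → IsOP (K ⊓ Lᗮ) (T - E) := by
    intro K T hLK hT hET x
    have happ : (T - E) x = T x - E x := rfl
    constructor
    · refine Submodule.mem_inf.mpr ⟨?_, ?_⟩
      · rw [happ]
        exact sub_mem (hT x).1 (hLK (hE x).1)
      · rw [happ]
        apply hE.apply_eq_zero_iff.mp
        have h2 : E (T x) = E x := by
          have := congrArg (fun f : H →L[ℂ] H => f x) hET
          simpa [ContinuousLinearMap.mul_apply] using this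
        have h3 : E (E x) = E x := hE.eq_self (hE x).1
        rw [map_sub, h2, h3, sub_self]
    · rw [Submodule.mem_orthogonal]
      intro u hu
      obtain ⟨huK, huL⟩ := Submodule.mem_inf.mp hu
      have h4 : x - (T - E) x = (x - T x) + E x := by rw [happ]; abel
      rw [h4, inner_add_right]
      have h5 : (inner ℂ u (x - T x) : ℂ) = 0 :=
        Submodule.inner_right_of_mem_orthogonal huK (hT x).2
      have h6 : (inner ℂ u (E x) : ℂ) = 0 :=
        Submodule.inner_left_of_mem_orthogonal (hE x).1 huL
      rw [h5, h6, add_zero]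
  have hP'OP : IsOP M' P' := hprojaux M P inf_le_left hP hEP
  have hQ'OP : IsOP N' Q' := hprojaux N Q inf_le_right hQ hEQ
  have hM'N' : M' ⊓ N' = ⊥ := by
    rw [eq_bot_iff]
    intro x hx
    obtain ⟨hx1, hx2⟩ := Submodule.mem_inf.mp hx
    obtain ⟨hxM, hxL⟩ := Submodule.mem_inf.mp hx1
    obtain ⟨hxN, _⟩ := Submodule.mem_inf.mp hx2
    have hxL' : x ∈ L := Submodule.mem_inf.mpr ⟨hxM, hxN⟩
    have : (inner ℂ x x : ℂ) = 0 := Submodule.inner_right_of_mem_orthogonal hxL' hxL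
    rw [Submodule.mem_bot]
    exact inner_self_eq_zero.mp this
  have hdecomp : ∀ x : H, x ∈ M ⊔ N ↔ x - E x ∈ M' ⊔ N' := by
    intro x
    constructor
    · intro hx
      obtain ⟨m, hm, n, hn, rfl⟩ := Submodule.mem_sup.mp hx
      have h1 : m + n - E (m + n) = (m - E m) + (n - E n) := by
        rw [map_add]; abel
      rw [h1]
      apply Submodule.add_mem_sup
      · exact Submodule.mem_inf.mpr ⟨sub_mem hm (Submodule.mem_inf.mp (hE m).1).1, (hE m).2⟩
      · exact Submodule.mem_inf.mpr ⟨sub_mem hn (Submodule.mem_inf.mp (hE n).1).2, (hE n).2⟩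
    · intro hx
      have h1 : x = E x + (x - E x) := by abel
      rw [h1]
      apply Submodule.add_mem
      · exact (le_trans (inf_le_left : L ≤ M) (le_sup_left : M ≤ M ⊔ N)) (hE x).1
      · exact (sup_le_sup (inf_le_left : M' ≤ M) (inf_le_left : N' ≤ N)) hx
  have dir1 : IsClosed ((M ⊔ N : Submodule ℂ H) : Set H) → ‖P' * Q'‖ < 1 := by
    intro hcl
    have hset : ((M' ⊔ N' : Submodule ℂ H) : Set H) =
        ((M ⊔ N : Submodule ℂ H) : Set H) ∩ (Lᗮ : Set H) := by
      ext z
      constructor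
      · intro hz
        obtain ⟨m, hm, n, hn, rfl⟩ := Submodule.mem_sup.mp hz
        obtain ⟨hmM, hmL⟩ := Submodule.mem_inf.mp hm
        obtain ⟨hnN, hnL⟩ := Submodule.mem_inf.mp hn
        exact ⟨Submodule.add_mem_sup hmM hnN, add_mem hmL hnL⟩
      · rintro ⟨hz1, hz2⟩
        have h1 : E z = 0 := hE.apply_eq_zero_iff.mpr hz2
        have h2 := (hdecomp z).mp hz1
        rwa [h1, sub_zero] at h2
    have hS' : IsClosed ((M' ⊔ N' : Submodule ℂ H) : Set H) := by
      rw [hset]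
      exact hcl.inter (Submodule.isClosed_orthogonal L)
    exact norm_lt_of_closed hM'c hN'c hP'OP hQ'OP hM'N' hS'
  have dir2 : ‖P' * Q'‖ < 1 →
      Tendsto (fun n : ℕ => (P * Q) ^ (n + 1)) atTop (𝓝 E) := by
    intro hc
    rw [tendsto_iff_norm_sub_tendsto_zero]
    have hg : Tendsto (fun n : ℕ => ‖P' * Q'‖ ^ (n + 1)) atTop (𝓝 0) :=
      (tendsto_pow_atTop_nhds_zero_of_lt_one (norm_nonneg _) hc).comp (tendsto_add_atTop_nat 1)
    refine squeeze_zero (fun n => norm_nonneg _) (fun n => ?_) hg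
    rw [hgeom n]
    exact norm_pow_le' _ (Nat.succ_pos n)
  have dir3 : ‖P' * Q'‖ < 1 → IsClosed ((M ⊔ N : Submodule ℂ H) : Set H) := by
    intro hc
    have hS' := closed_of_norm_lt hM'c hN'c hP'OP hQ'OP hc
    have hset : ((M ⊔ N : Submodule ℂ H) : Set H) =
        (fun x => x - E x) ⁻¹' ((M' ⊔ N' : Submodule ℂ H) : Set H) := Set.ext fun x => hdecomp x
    rw [hset]
    exact hS'.preimage (continuous_id.sub E.continuous)
  have dir4 : CauchySeq (fun n : ℕ => (P * Q) ^ (n + 1)) →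
      IsClosed ((M ⊔ N : Submodule ℂ H) : Set H) := by
    intro hcs
    obtain ⟨T, hT⟩ := cauchySeq_tendsto_of_complete hcs
    have hA1 : ‖P * Q‖ ≤ 1 := by
      calc ‖P * Q‖ ≤ ‖P‖ * ‖Q‖ := norm_mul_le P Q
        _ ≤ 1 * 1 := mul_le_mul hP.norm_le_one hQ.norm_le_one (norm_nonneg Q) zero_le_one
        _ = 1 := one_mul 1
    have hpow1 : ∀ n : ℕ, ‖(P * Q) ^ (n + 1)‖ ≤ 1 := fun n =>
      le_trans (norm_pow_le' _ (Nat.succ_pos n)) (pow_le_one₀ (norm_nonneg _) hA1)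
    have hTnorm : ‖T‖ ≤ 1 :=
      le_of_tendsto hT.norm (Eventually.of_forall hpow1)
    have hTidem : T * T = T := by
      have l1 : Tendsto (fun n : ℕ => (P * Q) ^ (n + 1) * (P * Q) ^ (n + 1)) atTop
          (𝓝 (T * T)) := hT.mul hT
      have l2 : Tendsto (fun n : ℕ => (P * Q) ^ (n + 1) * (P * Q) ^ (n + 1)) atTop (𝓝 T) := by
        have heq : (fun n : ℕ => (P * Q) ^ (n + 1) * (P * Q) ^ (n + 1)) =
            (fun n : ℕ => (P * Q) ^ (n + 1)) ∘ (fun n : ℕ => 2 * n + 1) := by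
          funext n
          simp only [Function.comp_apply, ← pow_add]
          congr 1
          omega
        rw [heq]
        exact hT.comp (tendsto_atTop_mono (fun n => show _root_.id n ≤ 2 * n + 1 by simp only [_root_.id]; omega) tendsto_id)
      exact tendsto_nhds_unique l1 l2
    have hTA : (P * Q) * T = T := by
      have l1 : Tendsto (fun n : ℕ => (P * Q) * (P * Q) ^ (n + 1)) atTop
          (𝓝 ((P * Q) * T)) := tendsto_const_nhds.mul hT
      have l2 : Tendsto (fun n : ℕ => (P * Q) * (P * Q) ^ (n + 1)) atTop (𝓝 T) := by
        have heq : (fun n : ℕ => (P * Q) * (P * Q) ^ (n + 1)) =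
            (fun n : ℕ => (P * Q) ^ (n + 1)) ∘ (fun n : ℕ => n + 1) := by
          funext n
          simp only [Function.comp_apply, ← pow_succ']
        rw [heq]
        exact hT.comp (tendsto_add_atTop_nat 1)
      exact tendsto_nhds_unique l1 l2
    have hptw : ∀ x : H, Tendsto (fun n : ℕ => ((P * Q) ^ (n + 1)) x) atTop (𝓝 (T x)) := by
      intro x
      rw [tendsto_iff_norm_sub_tendsto_zero]
      have hb : ∀ n : ℕ, ‖((P * Q) ^ (n + 1)) x - T x‖ ≤ ‖(P * Q) ^ (n + 1) - T‖ * ‖x‖ := by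
        intro n
        calc ‖((P * Q) ^ (n + 1)) x - T x‖ = ‖((P * Q) ^ (n + 1) - T) x‖ := by
              rw [ContinuousLinearMap.sub_apply]
          _ ≤ ‖(P * Q) ^ (n + 1) - T‖ * ‖x‖ := ((P * Q) ^ (n + 1) - T).le_opNorm x
      have hg : Tendsto (fun n : ℕ => ‖(P * Q) ^ (n + 1) - T‖ * ‖x‖) atTop (𝓝 0) := by
        have := (tendsto_iff_norm_sub_tendsto_zero.mp hT).mul_const ‖x‖
        simpa using this
      exact squeeze_zero (fun n => norm_nonneg _) hb hg
    have hfixL : ∀ x : H, x ∈ L → T x = x := by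
      intro x hx
      have hx1 : Q x = x := hQ.eq_self (Submodule.mem_inf.mp hx).2
      have hx2 : (P * Q) x = x := by
        rw [ContinuousLinearMap.mul_apply, hx1]
        exact hP.eq_self (Submodule.mem_inf.mp hx).1
      have hxn : ∀ n : ℕ, ((P * Q) ^ (n + 1)) x = x := by
        intro n
        induction n with
        | zero => simpa using hx2
        | succ k ih =>
          rw [pow_succ, ContinuousLinearMap.mul_apply, hx2, ih]
      have h1 := hptw x
      rw [show (fun n : ℕ => ((P * Q) ^ (n + 1)) x) = (fun _ : ℕ => x) from funext hxn] at h1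
      exact tendsto_nhds_unique h1 tendsto_const_nhds
    have hfix' : ∀ x : H, T x = x → x ∈ L := by
      intro x hx
      have h1 : P (Q x) = x := by
        have h2 : ((P * Q) * T) x = T x := by rw [hTA]
        calc P (Q x) = (P * Q) x := (ContinuousLinearMap.mul_apply P Q x).symm
          _ = (P * Q) (T x) := by rw [hx]
          _ = ((P * Q) * T) x := (ContinuousLinearMap.mul_apply _ T x).symm
          _ = T x := h2
          _ = x := hx
      have hxM : x ∈ M := h1 ▸ (hP (Q x)).1
      have hQle : ‖x‖ ≤ ‖Q x‖ := by
        calc ‖x‖ = ‖P (Q x)‖ := by rw [h1]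
          _ ≤ ‖Q x‖ := hP.norm_apply_le _
      have hQeq : ‖Q x‖ = ‖x‖ := le_antisymm (hQ.norm_apply_le x) hQle
      have hsq := hQ.norm_sq x
      have h9 : ‖x - Q x‖ ^ 2 = 0 := by rw [hQeq] at hsq; linarith
      have h10 : x - Q x = 0 := by
        have := pow_eq_zero_iff (n := 2) (by norm_num) |>.mp h9
        exact norm_eq_zero.mp this
      have hxN : x ∈ N := by
        have h11 : x = Q x := by
          have := sub_eq_zero.mp h10
          exact this
        rw [h11]
        exact (hQ x).1
      exact Submodule.mem_inf.mpr ⟨hxM, hxN⟩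
    have hTOP : IsOP L T := by
      intro x
      constructor
      · apply hfix'
        have := congrArg (fun f : H →L[ℂ] H => f x) hTidem
        simpa [ContinuousLinearMap.mul_apply] using this
      · rw [Submodule.mem_orthogonal]
        intro u hu
        have hu1 : T u = u := hfixL u hu
        have hu2 := adjoint_fixed hTnorm hu1
        rw [inner_sub_right, ← ContinuousLinearMap.adjoint_inner_left T x u, hu2, sub_self]
    have hTE : T = E := hTOP.unique hE
    rw [hTE] at hT
    have h0 : Tendsto (fun n : ℕ => ‖(P * Q) ^ (n + 1) - E‖) atTop (𝓝 0) :=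
      tendsto_iff_norm_sub_tendsto_zero.mp hT
    obtain ⟨n, hn⟩ := (h0.eventually_lt_const one_pos).exists
    rw [hgeom n] at hn
    exact dir3 (norm_lt_one_of_pow hP'OP.isSelfAdjoint hQ'OP.isSelfAdjoint hP'OP.idem
      hQ'OP.idem hP'OP.norm_le_one hn)
  refine ⟨⟨dir4, fun hcl => (dir2 (dir1 hcl)).cauchySeq⟩, ?_⟩
  intro hcl R hR
  have hRE : R = E := hR.unique hE
  rw [hRE]
  exact dir2 (dir1 hcl)

end TwoProj

/-- Two-projection theorem in a Hilbert space: for closed subspaces `M, N` with orthogonal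
projections `P, Q`, the sequence `(PQ)ⁿ` (n ≥ 1) is operator-norm Cauchy iff `M + N` is
closed, and in that case it converges in operator norm to the orthogonal projection onto
`M ∩ N`. -/
theorem stmt_7 {H : Type*} [NormedAddCommGroup H] [InnerProductSpace ℂ H] [CompleteSpace H]
    (M N : Submodule ℂ H) (hM : IsClosed (M : Set H)) (hN : IsClosed (N : Set H))
    (P Q : H →L[ℂ] H)
    (hP : ∀ x : H, P x ∈ M ∧ x - P x ∈ Mᗮ)
    (hQ : ∀ x : H, Q x ∈ N ∧ x - Q x ∈ Nᗮ) :
    (CauchySeq (fun n : ℕ => (P * Q) ^ (n + 1)) ↔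
      IsClosed ((M ⊔ N : Submodule ℂ H) : Set H)) ∧
    (IsClosed ((M ⊔ N : Submodule ℂ H) : Set H) →
      ∀ R : H →L[ℂ] H, (∀ x : H, R x ∈ M ⊓ N ∧ x - R x ∈ (M ⊓ N)ᗮ) →
        Tendsto (fun n : ℕ => (P * Q) ^ (n + 1)) atTop (𝓝 R)) := by
  exact TwoProj.master hM hN hP hQ
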